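/- A simplicial complex Δ is (non-pure) shellable with shelling order F_1,...,F_m if and only if the Alexander dual ideal I_{Δ^∨} = (u_1,...,u_m), with u_i = ∏_{j ∉ F_i} x_j, has linear quotients with admissible order u_1,...,u_m; and in that case R_δ(F_k) = q_{u_k,σ}(I_{Δ^∨}) for all k. -/

import Mathlib

attribute [local instance] Classical.propDecidable

abbrev Mon (n : ℕ) := Fin n →₀ ℕ

def mdeg {n : ℕ} (u : Mon n) : ℕ := u.sum fun _ e => e

/-- `mcolon u v` is the exponent vector of `u : v = u / gcd(u,v)`. -/
noncomputable def mcolon {n : ℕ} (u v : Mon n) : Mon n := u - v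

def IsAdmissible {n : ℕ} (L : List (Mon n)) : Prop :=
  ∀ i (hi : i < L.length), ∀ j (hj : j < i), ∃ k, ∃ hk : k < i,
    mdeg (mcolon (L[k]'(hk.trans hi)) (L[i]'hi)) = 1 ∧
    mcolon (L[k]'(hk.trans hi)) (L[i]'hi) ≤
      mcolon (L[j]'(hj.trans hi)) (L[i]'hi)

def LinearQuotientsSet {n : ℕ} (T : Set (Mon n)) : Prop :=
  ∃ L : List (Mon n), L.Nodup ∧ IsAdmissible L ∧ {u | u ∈ L} = T

def LinearQuotients {n : ℕ} (G : Finset (Mon n)) : Prop :=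
  LinearQuotientsSet (↑G : Set (Mon n))

/-- A (non-pure) shelling in the sense of Björner–Wachs: for each `k ≥ 2` the
intersection of `⟨F_k⟩` with `⟨F_1,…,F_{k-1}⟩` is nonempty and pure of dimension
`dim F_k - 1`. -/
def IsShelling {n : ℕ} (L : List (Finset (Fin n))) : Prop :=
  ∀ k (hk : k < L.length), 0 < k →
    (∃ G : Finset (Fin n), G ⊆ L[k]'hk ∧ G.card + 1 = (L[k]'hk).card ∧
      ∃ l, ∃ hl : l < k, G ⊆ L[l]'(hl.trans hk)) ∧
    (∀ G : Finset (Fin n), G ⊆ L[k]'hk →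
      (∃ l, ∃ hl : l < k, G ⊆ L[l]'(hl.trans hk)) →
      ∃ H : Finset (Fin n), G ⊆ H ∧ H ⊆ L[k]'hk ∧ H.card + 1 = (L[k]'hk).card ∧
        ∃ l, ∃ hl : l < k, H ⊆ L[l]'(hl.trans hk))

/-- The restriction set `R_δ(F) = {i ∈ F : F \ {i} ∈ ⟨F_1,…,F_{k-1}⟩}`, where `F` is the
`k`-th facet in the order `δ` given by the list `L`. -/
noncomputable def Rset {n : ℕ} (L : List (Finset (Fin n))) (F : Finset (Fin n)) :
    Finset (Fin n) :=
  F.filter fun i => ∃ l, ∃ hl : l < L.idxOf F,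
    F.erase i ⊆ L[l]'(hl.trans_le List.idxOf_le_length)

/-- `qset L u` is the set of (indices of) variables generating the colon ideal
`(u_1,…,u_{j-1}) : u_j` where `u = u_j` in the admissible order `L`. -/
def qset {n : ℕ} (L : List (Mon n)) (u : Mon n) : Set (Fin n) :=
  {t | ∃ j, j < L.idxOf u ∧ ∃ hj : j < L.length,
    mcolon (L[j]'hj) u = Finsupp.single t 1}

/-- The squarefree monomial with support `A`. -/
noncomputable def sqMon {n : ℕ} (A : Finset (Fin n)) : Mon n :=
  A.sum fun i => Finsupp.single i 1

lemma sqMon_apply {n : ℕ} (A : Finset (Fin n)) (j : Fin n) :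
    sqMon A j = if j ∈ A then 1 else 0 := by
  classical
  simp [sqMon, Finsupp.finset_sum_apply, Finsupp.single_apply, Finset.sum_ite_eq']

lemma support_sqMon {n : ℕ} (A : Finset (Fin n)) : (sqMon A).support = A := by
  ext j
  simp only [Finsupp.mem_support_iff, sqMon_apply]
  split_ifs with h <;> simp [h]

lemma sqMon_injective {n : ℕ} : Function.Injective (sqMon (n := n)) := by
  intro A B h
  rw [← support_sqMon A, ← support_sqMon B, h]

lemma mdeg_sqMon {n : ℕ} (A : Finset (Fin n)) : mdeg (sqMon A) = A.card := by
  unfold mdeg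
  rw [Finsupp.sum, support_sqMon]
  rw [Finset.sum_congr rfl (fun x hx => by rw [sqMon_apply, if_pos hx])]
  simp

lemma mcolon_sqMon {n : ℕ} (A B : Finset (Fin n)) :
    mcolon (sqMon A) (sqMon B) = sqMon (A \ B) := by
  ext j
  simp only [mcolon, Finsupp.tsub_apply, sqMon_apply, Finset.mem_sdiff]
  split_ifs <;> simp_all

lemma sqMon_le_sqMon_iff {n : ℕ} {A B : Finset (Fin n)} :
    sqMon A ≤ sqMon B ↔ A ⊆ B := by
  rw [Finsupp.le_def]
  constructor
  · intro h x hx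
    have := h x
    simp only [sqMon_apply, if_pos hx] at this
    by_contra hB
    simp [hB] at this
  · intro h x
    simp only [sqMon_apply]
    split_ifs with h1 h2
    · exact le_refl _
    · exact absurd (h h1) h2
    · omega
    · exact le_refl _

lemma single_eq_sqMon {n : ℕ} (t : Fin n) : Finsupp.single t 1 = sqMon {t} := by
  simp [sqMon]

lemma sqMon_eq_single_iff {n : ℕ} {A : Finset (Fin n)} {t : Fin n} :
    sqMon A = Finsupp.single t 1 ↔ A = {t} := by
  rw [single_eq_sqMon]
  exact ⟨fun h => sqMon_injective h, fun h => h ▸ rfl⟩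

lemma mcolon_compl {n : ℕ} (F G : Finset (Fin n)) :
    mcolon (sqMon Fᶜ) (sqMon Gᶜ) = sqMon (G \ F) := by
  rw [mcolon_sqMon, compl_sdiff_compl]

/-- A simplicial complex `Δ` (with facet list `L`, an antichain) is shellable with
shelling `F_1,…,F_m` if and only if the Alexander dual ideal `I_{Δ^∨}`, minimally
generated by the monomials `u_i = ∏_{j ∉ F_i} x_j`, has linear quotients with
admissible order `u_1,…,u_m`; in that case `R_δ(F_k) = q_{u_k,σ}(I_{Δ^∨})`. -/
theorem shelling_iff_alexander_dual_linearQuotients {n : ℕ}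
    (L : List (Finset (Fin n))) (hnd : L.Nodup)
    (hanti : ∀ F ∈ L, ∀ G ∈ L, F ⊆ G → F = G) :
    (IsShelling L ↔ IsAdmissible (L.map fun F => sqMon Fᶜ)) ∧
    (IsShelling L → ∀ k (hk : k < L.length),
      ↑(Rset L (L[k]'hk)) = qset (L.map fun F => sqMon Fᶜ) (sqMon ((L[k]'hk)ᶜ))) := by
  classical
  have hne : ∀ (k l : ℕ) (hk : k < L.length) (hl : l < L.length), k ≠ l →
      ¬ ((L[k]'hk) ⊆ (L[l]'hl)) := by
    intro k l hk hl hkl hsub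
    exact hkl (hnd.getElem_inj_iff.mp
      (hanti _ (L.getElem_mem hk) _ (L.getElem_mem hl) hsub))
  have key : ∀ (k l : ℕ) (hk : k < L.length) (hl : l < k) (t : Fin n),
      ((L[k]'hk) \ (L[l]'(hl.trans hk)) = {t}) ↔
        (t ∈ L[k]'hk ∧ (L[k]'hk).erase t ⊆ L[l]'(hl.trans hk)) := by
    intro k l hk hl t
    constructor
    · intro h
      have ht : t ∈ (L[k]'hk) \ (L[l]'(hl.trans hk)) := h ▸ Finset.mem_singleton_self t
      rw [Finset.mem_sdiff] at ht
      refine ⟨ht.1, fun x hx => ?_⟩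
      rw [Finset.mem_erase] at hx
      by_contra hxl
      have : x ∈ (L[k]'hk) \ (L[l]'(hl.trans hk)) := Finset.mem_sdiff.mpr ⟨hx.2, hxl⟩
      rw [h, Finset.mem_singleton] at this
      exact hx.1 this
    · rintro ⟨htk, hsub⟩
      have htl : t ∉ L[l]'(hl.trans hk) := by
        intro htl
        refine hne k l hk (hl.trans hk) (by omega) ?_
        intro x hx
        rcases eq_or_ne x t with rfl | hxt
        · exact htl
        · exact hsub (Finset.mem_erase.mpr ⟨hxt, hx⟩)
      ext x
      simp only [Finset.mem_sdiff, Finset.mem_singleton]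
      constructor
      · rintro ⟨hxk, hxl⟩
        by_contra hxt
        exact hxl (hsub (Finset.mem_erase.mpr ⟨hxt, hxk⟩))
      · rintro rfl; exact ⟨htk, htl⟩
  constructor
  · constructor
    · -- shelling → admissible
      intro hs i hi j hj
      simp only [List.length_map] at hi
      simp only [List.getElem_map, List.length_map]
      have h0 : 0 < i := by omega
      obtain ⟨-, hb⟩ := hs i hi h0
      obtain ⟨H, hGH, hHk, hcard, l, hl, hHl⟩ :=
        hb ((L[i]'hi) ∩ (L[j]'(hj.trans hi))) Finset.inter_subset_left
          ⟨j, hj, Finset.inter_subset_right⟩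
      have hcard1 : ((L[i]'hi) \ H).card = 1 := by
        rw [Finset.card_sdiff_of_subset hHk]; omega
      obtain ⟨t, ht⟩ := Finset.card_eq_one.mp hcard1
      have hsub1 : (L[i]'hi) \ (L[l]'(hl.trans hi)) ⊆ {t} := by
        rw [← ht]; exact Finset.sdiff_subset_sdiff (le_refl _) hHl
      have hnonempty : ((L[i]'hi) \ (L[l]'(hl.trans hi))).Nonempty := by
        rw [Finset.sdiff_nonempty]
        exact hne i l hi (hl.trans hi) (by omega)
      have heq : (L[i]'hi) \ (L[l]'(hl.trans hi)) = {t} := by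
        rcases Finset.subset_singleton_iff.mp hsub1 with h | h
        · exact absurd h (Finset.nonempty_iff_ne_empty.mp hnonempty)
        · exact h
      refine ⟨l, hl, ?_, ?_⟩
      · rw [mcolon_compl, heq, mdeg_sqMon, Finset.card_singleton]
      · rw [mcolon_compl, mcolon_compl, sqMon_le_sqMon_iff, heq,
          Finset.singleton_subset_iff, Finset.mem_sdiff]
        have htH : t ∈ (L[i]'hi) \ H := ht ▸ Finset.mem_singleton_self t
        rw [Finset.mem_sdiff] at htH
        exact ⟨htH.1, fun htj => htH.2 (hGH (Finset.mem_inter.mpr ⟨htH.1, htj⟩))⟩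
    · -- admissible → shelling
      intro ha k hk hk0
      have hk' : k < (L.map fun F => sqMon Fᶜ).length := by simpa using hk
      have hstep : ∀ j (hj : j < k), ∃ l, ∃ hl : l < k, ∃ t : Fin n,
          (L[k]'hk) \ (L[l]'(hl.trans hk)) = {t} ∧ t ∈ L[k]'hk ∧
            t ∉ L[j]'(hj.trans hk) := by
        intro j hj
        obtain ⟨l, hl, h1, h2⟩ := ha k hk' j hj
        simp only [List.getElem_map] at h1 h2
        rw [mcolon_compl, mdeg_sqMon] at h1
        rw [mcolon_compl, mcolon_compl, sqMon_le_sqMon_iff] at h2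
        obtain ⟨t, ht⟩ := Finset.card_eq_one.mp h1
        have htm : t ∈ (L[k]'hk) \ (L[j]'(hj.trans hk)) :=
          h2 (ht ▸ Finset.mem_singleton_self t)
        rw [Finset.mem_sdiff] at htm
        exact ⟨l, hl, t, ht, htm.1, htm.2⟩
      constructor
      · obtain ⟨l, hl, t, ht, htk, -⟩ := hstep 0 hk0
        refine ⟨(L[k]'hk).erase t, Finset.erase_subset _ _, ?_, l, hl,
          ((key k l hk hl t).mp ht).2⟩
        rw [Finset.card_erase_add_one htk]
      · rintro G hGk ⟨j, hj, hGj⟩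
        obtain ⟨l, hl, t, ht, htk, htj⟩ := hstep j hj
        have htG : t ∉ G := fun h => htj (hGj h)
        refine ⟨(L[k]'hk).erase t, Finset.subset_erase.mpr ⟨hGk, htG⟩,
          Finset.erase_subset _ _, ?_, l, hl, ((key k l hk hl t).mp ht).2⟩
        rw [Finset.card_erase_add_one htk]
  · intro _ k hk
    have hndm : (L.map fun F => sqMon Fᶜ).Nodup :=
      hnd.map (fun A B h => compl_injective (sqMon_injective h))
    have hidx : (L.map fun F => sqMon Fᶜ).idxOf (sqMon ((L[k]'hk)ᶜ)) = k := by
      have h1 : sqMon ((L[k]'hk)ᶜ) = (L.map fun F => sqMon Fᶜ)[k]'(by simpa using hk) := by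
        simp
      rw [h1, hndm.idxOf_getElem]
    have hidxL : L.idxOf (L[k]'hk) = k := hnd.idxOf_getElem k hk
    ext t
    simp only [qset, Rset, Finset.coe_filter, Set.mem_setOf_eq, hidx, hidxL,
      List.length_map, List.getElem_map]
    constructor
    · rintro ⟨htk, l, hl, hsub⟩
      refine ⟨l, hl, hl.trans hk, ?_⟩
      rw [mcolon_compl, sqMon_eq_single_iff]
      exact (key k l hk hl t).mpr ⟨htk, hsub⟩
    · rintro ⟨j, hj, hj', hcol⟩
      rw [mcolon_compl, sqMon_eq_single_iff] at hcol
      obtain ⟨htk, hsub⟩ := (key k j hk hj t).mp hcol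
      exact ⟨htk, j, hj, hsub⟩
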